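/- Einstein addition and Möbius addition on the same c-ball V_c are isomorphic via doubling: for all A, B, a ∈ V_c, (i) A ⊕_E B = 2 ⊙ ((½ ⊙ A) ⊕_M (½ ⊙ B)); (ii) A ⊕_M B = ½ ⊙ ((2 ⊙ A) ⊕_E (2 ⊙ B)); (iii) γ_{2⊙a} = 2·γ_a² − 1; and (iv) γ_{2⊙a}·(2 ⊙ a) = 2·γ_a²·a. -/

import Mathlib

open scoped RealInnerProductSpace

noncomputable def gamma {V : Type*} [NormedAddCommGroup V] [InnerProductSpace ℝ V]
    (c : ℝ) (u : V) : ℝ :=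
  1 / Real.sqrt (1 - ‖u‖ ^ 2 / c ^ 2)

noncomputable def eAdd {V : Type*} [NormedAddCommGroup V] [InnerProductSpace ℝ V]
    (c : ℝ) (u v : V) : V :=
  (1 / (1 + ⟪u, v⟫ / c ^ 2)) •
    (u + (1 / gamma c u) • v +
      ((1 / c ^ 2) * (gamma c u / (1 + gamma c u)) * ⟪u, v⟫) • u)

noncomputable def eGyr {V : Type*} [NormedAddCommGroup V] [InnerProductSpace ℝ V]
    (c : ℝ) (u v w : V) : V :=
  eAdd c (-(eAdd c u v)) (eAdd c u (eAdd c v w))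

noncomputable def eCoadd {V : Type*} [NormedAddCommGroup V] [InnerProductSpace ℝ V]
    (c : ℝ) (u v : V) : V :=
  eAdd c u (eGyr c u (-v) v)

noncomputable def mAdd {V : Type*} [NormedAddCommGroup V] [InnerProductSpace ℝ V]
    (s : ℝ) (u v : V) : V :=
  (1 / (1 + (2 / s ^ 2) * ⟪u, v⟫ + (1 / s ^ 4) * ‖u‖ ^ 2 * ‖v‖ ^ 2)) •
    ((1 + (2 / s ^ 2) * ⟪u, v⟫ + (1 / s ^ 2) * ‖v‖ ^ 2) • u +
      (1 - (1 / s ^ 2) * ‖u‖ ^ 2) • v)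

noncomputable def mGyr {V : Type*} [NormedAddCommGroup V] [InnerProductSpace ℝ V]
    (s : ℝ) (u v w : V) : V :=
  mAdd s (-(mAdd s u v)) (mAdd s u (mAdd s v w))

noncomputable def mCoadd {V : Type*} [NormedAddCommGroup V] [InnerProductSpace ℝ V]
    (s : ℝ) (u v : V) : V :=
  mAdd s u (mGyr s u (-v) v)

noncomputable def artanh (x : ℝ) : ℝ :=
  (1 / 2) * Real.log ((1 + x) / (1 - x))

open Classical in
noncomputable def sMul {V : Type*} [NormedAddCommGroup V] [InnerProductSpace ℝ V]
    (c : ℝ) (r : ℝ) (v : V) : V :=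
  if v = 0 then 0 else (c * Real.tanh (r * artanh (‖v‖ / c)) / ‖v‖) • v

variable {V : Type*} [NormedAddCommGroup V] [InnerProductSpace ℝ V]

section AuxLemmas

lemma tanh_eq' (y : ℝ) : Real.tanh y = (Real.exp (2*y) - 1)/(Real.exp (2*y) + 1) := by
  rw [Real.tanh_eq_sinh_div_cosh, Real.sinh_eq, Real.cosh_eq, Real.exp_neg, two_mul,
    Real.exp_add]
  have h := Real.exp_ne_zero y
  have h2 : Real.exp y * Real.exp y + 1 > 0 := by positivity
  field_simp

lemma tanh_two_artanh {t : ℝ} (h0 : 0 ≤ t) (h1 : t < 1) :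
    Real.tanh (2 * artanh t) = 2*t/(1+t^2) := by
  have hr : (0:ℝ) < (1+t)/(1-t) := by
    apply div_pos <;> linarith
  rw [tanh_eq', artanh]
  rw [show 2*(2*((1/2) * Real.log ((1+t)/(1-t)))) = Real.log ((1+t)/(1-t)) + Real.log ((1+t)/(1-t)) by ring,
    Real.exp_add, Real.exp_log hr]
  have h1t : (0:ℝ) < 1 - t := by linarith
  have h2 : (0:ℝ) < 1 + t^2 := by positivity
  have h3 : (0:ℝ) < (1+t)/(1-t) * ((1+t)/(1-t)) + 1 := by positivity
  rw [div_eq_div_iff (ne_of_gt h3) (by positivity)]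
  field_simp
  ring

lemma tanh_half_artanh {t : ℝ} (h0 : 0 ≤ t) (h1 : t < 1) :
    Real.tanh ((1/2) * artanh t) = t/(1+Real.sqrt (1-t^2)) := by
  have hr : (0:ℝ) < (1+t)/(1-t) := by apply div_pos <;> linarith
  rw [tanh_eq', artanh]
  rw [show 2*((1/2)*((1/2) * Real.log ((1+t)/(1-t)))) = (1/2) * Real.log ((1+t)/(1-t)) by ring]
  rw [show (1/2 : ℝ) * Real.log ((1+t)/(1-t)) = Real.log ((1+t)/(1-t)) * (1/2) by ring,
    ← Real.rpow_def_of_pos hr, ← Real.sqrt_eq_rpow]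
  have hsub : (1:ℝ) - t^2 = (1+t)*(1-t) := by ring
  rw [hsub, Real.sqrt_mul (by linarith : (0:ℝ) ≤ 1+t), Real.sqrt_div (by linarith : (0:ℝ) ≤ 1+t) (1-t)]
  set x := Real.sqrt (1+t) with hx
  set y := Real.sqrt (1-t) with hy
  have hx2 : x^2 = 1 + t := Real.sq_sqrt (by linarith)
  have hy2 : y^2 = 1 - t := Real.sq_sqrt (by linarith)
  have hxpos : 0 < x := Real.sqrt_pos.2 (by linarith)
  have hypos : 0 < y := Real.sqrt_pos.2 (by linarith)
  have h1' : x/y + 1 > 0 := by positivity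
  have h2' : 1 + x*y > 0 := by positivity
  rw [div_eq_div_iff (ne_of_gt h1') (ne_of_gt h2')]
  field_simp
  linear_combination y * hx2 - x * hy2

lemma norm_combo (x y : ℝ) (A B : V) :
    ‖x • A + y • B‖^2 = x^2*‖A‖^2 + 2*(x*y)*⟪A,B⟫ + y^2*‖B‖^2 := by
  rw [@norm_add_sq_real]
  simp only [norm_smul, real_inner_smul_left, real_inner_smul_right, Real.norm_eq_abs,
    mul_pow, sq_abs]
  ring

omit [InnerProductSpace ℝ V] in
lemma sq_lt_sq_c {c : ℝ} {v : V} (hc : 0 < c) (hv : ‖v‖ < c) : ‖v‖^2 < c^2 := by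
  nlinarith [norm_nonneg v]

lemma one_sub_pos' {c : ℝ} {v : V} (hc : 0 < c) (hv : ‖v‖ < c) :
    0 < 1 - ‖v‖^2/c^2 := by
  have := sq_lt_sq_c hc hv
  have hc2 : 0 < c^2 := by positivity
  rw [sub_pos, div_lt_one hc2]; exact this

lemma gamma_pos {c : ℝ} {v : V} (hc : 0 < c) (hv : ‖v‖ < c) : 0 < gamma c v := by
  have := one_sub_pos' hc hv
  rw [gamma]
  positivity

lemma sqrt_gamma {c : ℝ} (v : V) : Real.sqrt (1 - ‖v‖^2/c^2) = 1 / gamma c v := by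
  rw [gamma, one_div_one_div]

lemma gamma_sq_eq {c : ℝ} {v : V} (hc : 0 < c) (hv : ‖v‖ < c) :
    gamma c v ^ 2 = c^2/(c^2 - ‖v‖^2) := by
  have h := one_sub_pos' hc hv
  rw [gamma, div_pow, one_pow, Real.sq_sqrt (le_of_lt h)]
  have h2 : c^2 - ‖v‖^2 ≠ 0 := by nlinarith [sq_lt_sq_c hc hv]
  rw [one_div, eq_div_iff h2]
  field_simp

lemma sMul_two {c : ℝ} {v : V} (hc : 0 < c) (hv : ‖v‖ < c) :
    sMul c 2 v = (2*c^2/(c^2 + ‖v‖^2)) • v := by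
  rw [sMul]
  by_cases h0 : v = 0
  · simp [h0]
  rw [if_neg h0]
  have hn : 0 < ‖v‖ := norm_pos_iff.2 h0
  have ht0 : 0 ≤ ‖v‖/c := by positivity
  have ht1 : ‖v‖/c < 1 := by rw [div_lt_one hc]; exact hv
  rw [tanh_two_artanh ht0 ht1]
  congr 1
  have h2 : (0:ℝ) < c^2 + ‖v‖^2 := by positivity
  field_simp

lemma sMul_half_sqrt {c : ℝ} {v : V} (hc : 0 < c) (hv : ‖v‖ < c) :
    sMul c (1/2) v = (1/(1 + Real.sqrt (1 - ‖v‖^2/c^2))) • v := by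
  rw [sMul]
  by_cases h0 : v = 0
  · simp [h0]
  rw [if_neg h0]
  have hn : 0 < ‖v‖ := norm_pos_iff.2 h0
  have ht0 : 0 ≤ ‖v‖/c := by positivity
  have ht1 : ‖v‖/c < 1 := by rw [div_lt_one hc]; exact hv
  rw [tanh_half_artanh ht0 ht1]
  congr 1
  have hs : 0 ≤ Real.sqrt (1 - ‖v‖^2/c^2) := Real.sqrt_nonneg _
  have hd : 0 < 1 + Real.sqrt (1 - ‖v‖^2/c^2) := by linarith
  field_simp

lemma sMul_half' {c : ℝ} {v : V} (hc : 0 < c) (hv : ‖v‖ < c) :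
    sMul c (1/2) v = (gamma c v/(1 + gamma c v)) • v := by
  rw [sMul_half_sqrt hc hv, sqrt_gamma]
  have hg := gamma_pos hc hv
  have hg1 : (1:ℝ) + gamma c v ≠ 0 := by linarith
  congr 1
  rw [div_eq_div_iff (by positivity) hg1]
  field_simp
  ring

lemma gamma_double {c : ℝ} {v : V} (hc : 0 < c) (hv : ‖v‖ < c) :
    gamma c ((2*c^2/(c^2 + ‖v‖^2)) • v) = (c^2 + ‖v‖^2)/(c^2 - ‖v‖^2) := by
  have h1 : (0:ℝ) < c^2 + ‖v‖^2 := by positivity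
  have h2 : (0:ℝ) < c^2 - ‖v‖^2 := by nlinarith [sq_lt_sq_c hc hv]
  rw [gamma, norm_smul, Real.norm_eq_abs, abs_of_pos (by positivity : (0:ℝ) < 2*c^2/(c^2+‖v‖^2))]
  rw [show 1 - (2*c^2/(c^2+‖v‖^2)*‖v‖)^2/c^2 = ((c^2-‖v‖^2)/(c^2+‖v‖^2))^2 by field_simp; ring]
  rw [Real.sqrt_sq (by positivity), one_div_div]

lemma mAdd_smul_smul (c x y d : ℝ) (A B : V)
    (hd : 1 + (2/c^2)*(y*(x*⟪A,B⟫)) + (1/c^4)*(x^2*‖A‖^2)*(y^2*‖B‖^2) = d) :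
    mAdd c (x • A) (y • B) =
      ((x*(1 + (2/c^2)*(y*(x*⟪A,B⟫)) + (1/c^2)*(y^2*‖B‖^2)))/d) • A +
      ((y*(1 - (1/c^2)*(x^2*‖A‖^2)))/d) • B := by
  rw [mAdd]
  simp only [real_inner_smul_left, real_inner_smul_right, norm_smul, Real.norm_eq_abs,
    mul_pow, sq_abs]
  rw [hd]
  match_scalars <;> ring

lemma eAdd_smul_smul (c x y g d : ℝ) (A B : V)
    (hg : gamma c (x • A) = g)
    (hd : 1 + y*(x*⟪A,B⟫)/c^2 = d) :
    eAdd c (x • A) (y • B) =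
      ((x*(1 + (1/c^2)*(g/(1+g))*(y*(x*⟪A,B⟫))))/d) • A + ((y/g)/d) • B := by
  rw [eAdd, hg]
  simp only [real_inner_smul_left, real_inner_smul_right]
  rw [hd]
  match_scalars <;> ring

end AuxLemmas

set_option maxHeartbeats 3000000 in
theorem einstein_mobius_isomorphism (c : ℝ) (hc : 0 < c) (A B a : V)
    (hA : ‖A‖ < c) (hB : ‖B‖ < c) (ha : ‖a‖ < c) :
    eAdd c A B = sMul c 2 (mAdd c (sMul c (1 / 2) A) (sMul c (1 / 2) B)) ∧
    mAdd c A B = sMul c (1 / 2) (eAdd c (sMul c 2 A) (sMul c 2 B)) ∧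
    gamma c (sMul c 2 a) = 2 * gamma c a ^ 2 - 1 ∧
    gamma c (sMul c 2 a) • sMul c 2 a = (2 * gamma c a ^ 2) • a := by
  have hcne : c ≠ 0 := ne_of_gt hc
  have hc2 : (0:ℝ) < c^2 := by positivity
  have hca : c^2 - ‖a‖^2 ≠ 0 := by nlinarith [sq_lt_sq_c hc ha]
  have hcaa : (0:ℝ) < c^2 + ‖a‖^2 := by positivity
  have hp := abs_real_inner_le_norm A B
  have hAB : ‖A‖*‖B‖ < c^2 := by nlinarith [norm_nonneg A, norm_nonneg B]
  have hcp : (0:ℝ) < c^2 + ⟪A,B⟫ := by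
    have h := (abs_le.1 hp).1
    linarith
  have hcpne : c^2 + ⟪A,B⟫ ≠ 0 := ne_of_gt hcp
  refine ⟨?_, ?_, ?_, ?_⟩
  · -- part (i)
    have hgApos := gamma_pos hc hA
    have hgBpos := gamma_pos hc hB
    set gA := gamma c A with hgAdef
    set gB := gamma c B with hgBdef
    have hgA0 : gA ≠ 0 := ne_of_gt hgApos
    have hgB0 : gB ≠ 0 := ne_of_gt hgBpos
    have h1gA : (1:ℝ) + gA ≠ 0 := by linarith
    have h1gB : (1:ℝ) + gB ≠ 0 := by linarith
    have hcA : c^2 - ‖A‖^2 ≠ 0 := by nlinarith [sq_lt_sq_c hc hA]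
    have hcB : c^2 - ‖B‖^2 ≠ 0 := by nlinarith [sq_lt_sq_c hc hB]
    have hA2 : ‖A‖^2 = c^2 - c^2/gA^2 := by
      have h := gamma_sq_eq hc hA
      rw [← hgAdef] at h
      field_simp [hgA0] at h ⊢
      linear_combination -h
    have hB2 : ‖B‖^2 = c^2 - c^2/gB^2 := by
      have h := gamma_sq_eq hc hB
      rw [← hgBdef] at h
      field_simp [hgB0] at h ⊢
      linear_combination -h
    set E := c^2 + gA*gB*(c^2+⟪A,B⟫) with hEdef
    have hEpos : 0 < E := by
      rw [hEdef]
      have := mul_pos (mul_pos hgApos hgBpos) hcp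
      nlinarith
    have hE0 : E ≠ 0 := ne_of_gt hEpos
    have hd : 1 + (2/c^2)*((gB/(1+gB))*((gA/(1+gA))*⟪A,B⟫)) +
        (1/c^4)*((gA/(1+gA))^2*‖A‖^2)*((gB/(1+gB))^2*‖B‖^2)
        = 2*E/((1+gA)*(1+gB)*c^2) := by
      rw [hA2, hB2, hEdef]
      field_simp
      ring
    have h1' : mAdd c (sMul c (1/2) A) (sMul c (1/2) B) =
        (gA*gB*(c^2*(1+gA)+gA*⟪A,B⟫)/((1+gA)*E)) • A + (gB*c^2/E) • B := by
      rw [sMul_half' hc hA, sMul_half' hc hB, ← hgAdef, ← hgBdef,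
        mAdd_smul_smul c (gA/(1+gA)) (gB/(1+gB)) (2*E/((1+gA)*(1+gB)*c^2)) A B hd]
      rw [hA2, hB2, hEdef]
      match_scalars <;> (field_simp; ring)
    have hN1 : c^2 + ‖(gA*gB*(c^2*(1+gA)+gA*⟪A,B⟫)/((1+gA)*E)) • A + (gB*c^2/E) • B‖^2 =
        2*c^2*gA*gB*(c^2+⟪A,B⟫)/E := by
      rw [norm_combo, hA2, hB2, hEdef]
      field_simp
      ring
    have hwlt : ‖(gA*gB*(c^2*(1+gA)+gA*⟪A,B⟫)/((1+gA)*E)) • A + (gB*c^2/E) • B‖ < c := by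
      have h3 : (c^2 + ‖(gA*gB*(c^2*(1+gA)+gA*⟪A,B⟫)/((1+gA)*E)) • A + (gB*c^2/E) • B‖^2) * E =
          2*c^2*gA*gB*(c^2+⟪A,B⟫) := by
        rw [hN1, div_mul_cancel₀ _ hE0]
      have h3' : (c^2 + ‖(gA*gB*(c^2*(1+gA)+gA*⟪A,B⟫)/((1+gA)*E)) • A + (gB*c^2/E) • B‖^2) * E =
          2*c^2*E - 2*c^4 := by
        rw [h3, hEdef]; ring
      have hsq : ‖(gA*gB*(c^2*(1+gA)+gA*⟪A,B⟫)/((1+gA)*E)) • A + (gB*c^2/E) • B‖^2 < c^2 := by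
        nlinarith [h3', hEpos, hc2]
      nlinarith [norm_nonneg ((gA*gB*(c^2*(1+gA)+gA*⟪A,B⟫)/((1+gA)*E)) • A + (gB*c^2/E) • B), hc]
    rw [h1', sMul_two hc hwlt, hN1, eAdd, ← hgAdef, one_add_div (ne_of_gt hc2)]
    match_scalars <;> (field_simp <;> ring)
  · -- part (ii)
    have hcApos : (0:ℝ) < c^2 - ‖A‖^2 := by nlinarith [sq_lt_sq_c hc hA]
    have hcBpos : (0:ℝ) < c^2 - ‖B‖^2 := by nlinarith [sq_lt_sq_c hc hB]
    have hcAp : (0:ℝ) < c^2 + ‖A‖^2 := by positivity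
    have hcBp : (0:ℝ) < c^2 + ‖B‖^2 := by positivity
    set DS := (c^2+‖A‖^2)*(c^2+‖B‖^2)+4*⟪A,B⟫*c^2 with hDSdef
    have hDSpos : 0 < DS := by
      rw [hDSdef]
      nlinarith [mul_pos (sub_pos.2 hAB) (sub_pos.2 hAB), (abs_le.1 hp).1,
        mul_nonneg hc2.le (sq_nonneg (‖A‖-‖B‖)), hc2]
    have hDS0 : DS ≠ 0 := ne_of_gt hDSpos
    have hg := gamma_double hc hA
    have hd : 1 + (2*c^2/(c^2+‖B‖^2))*((2*c^2/(c^2+‖A‖^2))*⟪A,B⟫)/c^2 =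
        DS/((c^2+‖A‖^2)*(c^2+‖B‖^2)) := by
      rw [hDSdef]
      field_simp
      ring
    have h2' : eAdd c (sMul c 2 A) (sMul c 2 B) =
        (2*c^2*(c^2+‖B‖^2+2*⟪A,B⟫)/DS) • A + (2*c^2*(c^2-‖A‖^2)/DS) • B := by
      rw [sMul_two hc hA, sMul_two hc hB,
        eAdd_smul_smul c (2*c^2/(c^2+‖A‖^2)) (2*c^2/(c^2+‖B‖^2))
          ((c^2+‖A‖^2)/(c^2-‖A‖^2)) (DS/((c^2+‖A‖^2)*(c^2+‖B‖^2))) A B hg hd, hDSdef]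
      have hgden : (1:ℝ) + (c^2+‖A‖^2)/(c^2-‖A‖^2) ≠ 0 := by
        have := div_pos hcAp hcApos
        positivity
      match_scalars <;> (field_simp <;> ring)
    have hS : 1 - ‖(2*c^2*(c^2+‖B‖^2+2*⟪A,B⟫)/DS) • A + (2*c^2*(c^2-‖A‖^2)/DS) • B‖^2/c^2 =
        ((c^2-‖A‖^2)*(c^2-‖B‖^2)/DS)^2 := by
      rw [norm_combo]
      field_simp
      rw [hDSdef]
      ring
    have hSpos : 0 < (c^2-‖A‖^2)*(c^2-‖B‖^2)/DS := div_pos (mul_pos hcApos hcBpos) hDSpos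
    have hvlt : ‖(2*c^2*(c^2+‖B‖^2+2*⟪A,B⟫)/DS) • A + (2*c^2*(c^2-‖A‖^2)/DS) • B‖ < c := by
      have hq : ‖(2*c^2*(c^2+‖B‖^2+2*⟪A,B⟫)/DS) • A + (2*c^2*(c^2-‖A‖^2)/DS) • B‖^2 < c^2 := by
        have h4 : c^2 - ‖(2*c^2*(c^2+‖B‖^2+2*⟪A,B⟫)/DS) • A + (2*c^2*(c^2-‖A‖^2)/DS) • B‖^2 =
            c^2 * ((c^2-‖A‖^2)*(c^2-‖B‖^2)/DS)^2 := by
          rw [norm_combo]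
          field_simp
          rw [hDSdef]
          ring
        nlinarith [pow_pos hSpos 2, hc2]
      nlinarith [norm_nonneg ((2*c^2*(c^2+‖B‖^2+2*⟪A,B⟫)/DS) • A + (2*c^2*(c^2-‖A‖^2)/DS) • B), hc]
    have hsqrt : Real.sqrt (1 - ‖(2*c^2*(c^2+‖B‖^2+2*⟪A,B⟫)/DS) • A + (2*c^2*(c^2-‖A‖^2)/DS) • B‖^2/c^2) =
        (c^2-‖A‖^2)*(c^2-‖B‖^2)/DS := by
      rw [hS, Real.sqrt_sq hSpos.le]
    have hDm0 : c^4+2*⟪A,B⟫*c^2+‖A‖^2*‖B‖^2 ≠ 0 := by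
      have := (abs_le.1 hp).1
      nlinarith [mul_pos (sub_pos.2 hAB) (sub_pos.2 hAB), hc2]
    have hDm : (1:ℝ) + 2 / c ^ 2 * ⟪A, B⟫ + 1 / c ^ 4 * ‖A‖ ^ 2 * ‖B‖ ^ 2 =
        (c^4+2*⟪A,B⟫*c^2+‖A‖^2*‖B‖^2)/c^4 := by
      field_simp
    rw [h2', sMul_half_sqrt hc hvlt, hsqrt, mAdd, hDm, one_add_div hDS0,
      show DS + (c^2-‖A‖^2)*(c^2-‖B‖^2) = 2*(c^4+2*⟪A,B⟫*c^2+‖A‖^2*‖B‖^2) by rw [hDSdef]; ring]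
    match_scalars <;> (field_simp <;> ring)
  · -- part (iii)
    rw [sMul_two hc ha, gamma_double hc ha, gamma_sq_eq hc ha]
    field_simp
    ring
  · -- part (iv)
    rw [sMul_two hc ha, gamma_double hc ha, gamma_sq_eq hc ha, smul_smul]
    match_scalars
    field_simp
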